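/- Every mixed stabilizer state has stabilizer norm at most one: if ρ_C = Σ_i p_i |ψ_i⟩⟨ψ_i| is a finite convex combination (p_i ≥ 0, Σ_i p_i = 1) of pure stabilizer states |ψ_i⟩ on n qubits, then D(ρ_C) ≤ 1, i.e. ln D(ρ_C) ≤ 0. -/

import Mathlib

open Matrix Complex BigOperators
open scoped ComplexOrder

noncomputable section

/-- Index type for `n` qubits: functions `Fin n → Fin 2` (cardinality `2^n`). -/
abbrev QIdx (n : ℕ) := Fin n → Fin 2

/-- The four single-qubit Pauli matrices: `σ⁰ = I`, `σ¹ = σˣ`, `σ² = σᶻ`, `σ³ = σʸ`. -/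
def pauliMat : Fin 4 → Matrix (Fin 2) (Fin 2) ℂ
  | 0 => 1
  | 1 => !![0, 1; 1, 0]
  | 2 => !![1, 0; 0, -1]
  | 3 => !![0, -Complex.I; Complex.I, 0]

/-- The Pauli string `σ^{a_1} ⊗ ⋯ ⊗ σ^{a_n}` as a `2^n × 2^n` matrix. -/
def pauliString {n : ℕ} (a : Fin n → Fin 4) : Matrix (QIdx n) (QIdx n) ℂ :=
  fun i j => ∏ k, pauliMat (a k) (i k) (j k)

/-- An `n`-qubit state: positive semidefinite with unit trace. -/
def IsState {n : ℕ} (ρ : Matrix (QIdx n) (QIdx n) ℂ) : Prop :=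
  ρ.PosSemidef ∧ ρ.trace = 1

/-- The `α`-moment of the Pauli spectrum `A_α(ρ) = 2^{-n} ∑_P |tr(ρP)|^{2α}`. -/
def Amom {n : ℕ} (α : ℝ) (ρ : Matrix (QIdx n) (QIdx n) ℂ) : ℝ :=
  ((2:ℝ)^n)⁻¹ * ∑ a : Fin n → Fin 4, (‖(ρ * pauliString a).trace‖) ^ (2 * α)

/-- The 2-Rényi entropy `S₂(ρ) = -ln tr(ρ²)`. -/
def S2 {n : ℕ} (ρ : Matrix (QIdx n) (QIdx n) ℂ) : ℝ :=
  - Real.log ((ρ * ρ).trace.re)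

/-- The magic witness `W_α(ρ) = (1/(1-α)) ln A_α(ρ) - ((1-2α)/(1-α)) S₂(ρ)`. -/
def Wit {n : ℕ} (α : ℝ) (ρ : Matrix (QIdx n) (QIdx n) ℂ) : ℝ :=
  (1 / (1 - α)) * Real.log (Amom α ρ) - ((1 - 2*α)/(1 - α)) * S2 ρ

/-- The stabilizer norm `D(ρ) = A_{1/2}(ρ) = 2^{-n} ∑_P |tr(ρP)|`. -/
def Dnorm {n : ℕ} (ρ : Matrix (QIdx n) (QIdx n) ℂ) : ℝ :=
  Amom (1/2) ρ

/-- A Clifford unitary: unitary mapping every Pauli string to `±` a Pauli string. -/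
def IsCliffordUnitary {n : ℕ} (U : Matrix (QIdx n) (QIdx n) ℂ) : Prop :=
  U ∈ Matrix.unitaryGroup (QIdx n) ℂ ∧
    ∀ a : Fin n → Fin 4, ∃ (b : Fin n → Fin 4) (ε : ℝ),
      (ε = 1 ∨ ε = -1) ∧ U * pauliString a * Uᴴ = (ε : ℂ) • pauliString b

/-- The computational all-zeros basis vector `|0⟩^{⊗n}`. -/
def zeroVec (n : ℕ) : QIdx n → ℂ :=
  fun i => if (∀ k, i k = 0) then 1 else 0

/-- A pure stabilizer state vector: `U|0⟩^{⊗n}` for a Clifford unitary `U`. -/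
def IsPureStab {n : ℕ} (ψ : QIdx n → ℂ) : Prop :=
  ∃ U, IsCliffordUnitary U ∧ ψ = U.mulVec (zeroVec n)

/-- The rank-one projector `|ψ⟩⟨ψ|`. -/
def proj {n : ℕ} (ψ : QIdx n → ℂ) : Matrix (QIdx n) (QIdx n) ℂ :=
  Matrix.vecMulVec ψ (star ψ)

/-- A mixed stabilizer state: a finite convex combination of pure stabilizer projectors. -/
def IsMixedStab {n : ℕ} (ρ : Matrix (QIdx n) (QIdx n) ℂ) : Prop :=
  ∃ (k : ℕ) (p : Fin k → ℝ) (ψ : Fin k → QIdx n → ℂ),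
    (∀ i, 0 ≤ p i) ∧ (∑ i, p i = 1) ∧ (∀ i, IsPureStab (ψ i)) ∧
    ρ = ∑ i, (p i : ℂ) • proj (ψ i)

/-- The set of values `ln ∑ᵢ |xᵢ|` over finite real stabilizer decompositions of `ρ`. -/
def StabDecomps {n : ℕ} (ρ : Matrix (QIdx n) (QIdx n) ℂ) : Set ℝ :=
  { r | ∃ (k : ℕ) (x : Fin k → ℝ) (ψ : Fin k → QIdx n → ℂ),
      (∀ i, IsPureStab (ψ i)) ∧ ρ = ∑ i, (x i : ℂ) • proj (ψ i) ∧
      r = Real.log (∑ i, |x i|) }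

/-- The log-free robustness of magic. -/
def LR {n : ℕ} (ρ : Matrix (QIdx n) (QIdx n) ℂ) : ℝ := sInf (StabDecomps ρ)

open Classical in
/-- Positive-semidefinite square root (junk value `0` off the PSD cone). -/
def psdSqrt {n : ℕ} (A : Matrix (QIdx n) (QIdx n) ℂ) : Matrix (QIdx n) (QIdx n) ℂ :=
  if h : A.PosSemidef then
    (h.1.eigenvectorUnitary : Matrix (QIdx n) (QIdx n) ℂ) *
      diagonal ((↑) ∘ (√·) ∘ h.1.eigenvalues) *
      (star h.1.eigenvectorUnitary : Matrix (QIdx n) (QIdx n) ℂ)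
  else 0

/-- The Uhlmann fidelity `F(ρ,σ) = (tr √(√ρ σ √ρ))²`. -/
def fidelity {n : ℕ} (ρ σ : Matrix (QIdx n) (QIdx n) ℂ) : ℝ :=
  ((psdSqrt (psdSqrt ρ * σ * psdSqrt ρ)).trace.re) ^ 2

/-- The stabilizer fidelity `D_F(ρ) = inf { -ln F(ρ,σ) : σ a mixed stabilizer state }`. -/
def DF {n : ℕ} (ρ : Matrix (QIdx n) (QIdx n) ℂ) : ℝ :=
  sInf { r | ∃ σ, IsMixedStab σ ∧ r = - Real.log (fidelity ρ σ) }

/-- Filtered Pauli moment `Ã_α(ρ) = (2^n A_α(ρ) - 1)/(2^n - 1)`. -/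
def Atil {n : ℕ} (α : ℝ) (ρ : Matrix (QIdx n) (QIdx n) ℂ) : ℝ :=
  ((2:ℝ)^n * Amom α ρ - 1) / ((2:ℝ)^n - 1)

/-- Filtered stabilizer norm `D̃(ρ) = (2^n D(ρ) - 1)/(2^n - 1)`. -/
def Dtil {n : ℕ} (ρ : Matrix (QIdx n) (QIdx n) ℂ) : ℝ :=
  ((2:ℝ)^n * Dnorm ρ - 1) / ((2:ℝ)^n - 1)

/-- Filtered magic witness `W̃_α(ρ) = (1/(1-α)) ln Ã_α(ρ) + ((1-2α)/(1-α)) ln Ã₁(ρ)`. -/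
def Wtil {n : ℕ} (α : ℝ) (ρ : Matrix (QIdx n) (QIdx n) ℂ) : ℝ :=
  (1/(1-α)) * Real.log (Atil α ρ) + ((1 - 2*α)/(1-α)) * Real.log (Atil 1 ρ)

/-- The maximally mixed state `I/2^n`. -/
def maxMixed (n : ℕ) : Matrix (QIdx n) (QIdx n) ℂ := ((2:ℂ)^n)⁻¹ • 1

/-- The single-qubit T-state vector `|T⟩ = (|0⟩ + e^{-iπ/4}|1⟩)/√2`. -/
def Tket : QIdx 1 → ℂ :=
  fun i => if i 0 = 0 then (Real.sqrt 2 : ℂ)⁻¹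
           else Complex.exp (-(Real.pi/4 : ℂ) * Complex.I) * (Real.sqrt 2 : ℂ)⁻¹

/-- The depolarized T-state `ρ_p = (1-p)|T⟩⟨T| + p·I₂/2`. -/
def rhoDep (p : ℝ) : Matrix (QIdx 1) (QIdx 1) ℂ :=
  ((1 - p : ℝ) : ℂ) • proj Tket + ((p : ℝ) : ℂ) • (((2:ℂ))⁻¹ • 1)



section Aux

lemma pauli_trace_mul (a b : Fin 4) :
    (pauliMat a * pauliMat b).trace = if a = b then 2 else 0 := by
  fin_cases a <;> fin_cases b <;>
    simp [pauliMat, Matrix.trace, Matrix.mul_apply, Fin.sum_univ_two, Matrix.one_apply,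
      Complex.ext_iff] <;> norm_num

lemma pauliString_trace_mul {n : ℕ} (a b : Fin n → Fin 4) :
    (pauliString a * pauliString b).trace = ∏ k, (pauliMat (a k) * pauliMat (b k)).trace := by
  classical
  have h1 : (pauliString a * pauliString b).trace
      = ∑ p : QIdx n × QIdx n, ∏ k,
          (pauliMat (a k) (p.1 k) (p.2 k) * pauliMat (b k) (p.2 k) (p.1 k)) := by
    rw [Matrix.trace, Fintype.sum_prod_type]
    simp [Matrix.mul_apply, pauliString, Matrix.diag, Finset.prod_mul_distrib]
  rw [h1]
  have h2 : ∀ k, (pauliMat (a k) * pauliMat (b k)).trace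
      = ∑ q : Fin 2 × Fin 2, pauliMat (a k) q.1 q.2 * pauliMat (b k) q.2 q.1 := by
    intro k
    rw [Matrix.trace, Fintype.sum_prod_type]
    simp [Matrix.mul_apply, Matrix.diag]
  simp_rw [h2]
  rw [Fintype.prod_sum (fun k (q : Fin 2 × Fin 2) => pauliMat (a k) q.1 q.2 * pauliMat (b k) q.2 q.1)]
  exact Fintype.sum_equiv (Equiv.arrowProdEquivProdArrow (Fin n) (fun _ => Fin 2) (fun _ => Fin 2)).symm _ _
    (fun q => rfl)

lemma pauliString_eq_smul {n : ℕ} {a b : Fin n → Fin 4} {c : ℂ} (hc : c ≠ 0)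
    (h : pauliString a = c • pauliString b) : a = b := by
  have ht : (pauliString a * pauliString b).trace = c * 2 ^ n := by
    rw [h, Matrix.smul_mul, Matrix.trace_smul, pauliString_trace_mul]
    simp [pauli_trace_mul, smul_eq_mul]
  have hne : (pauliString a * pauliString b).trace ≠ 0 := by
    rw [ht]
    exact mul_ne_zero hc (by norm_num)
  rw [pauliString_trace_mul] at hne
  funext k
  by_contra hk
  exact hne (Finset.prod_eq_zero (Finset.mem_univ k) (by simp [pauli_trace_mul, hk]))

lemma proj_mulVec {n : ℕ} (U : Matrix (QIdx n) (QIdx n) ℂ) (x : QIdx n → ℂ) :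
    proj (U.mulVec x) = U * proj x * Uᴴ := by
  rw [proj, proj, Matrix.vecMulVec_eq Unit, Matrix.vecMulVec_eq Unit,
    Matrix.star_mulVec, Matrix.replicateCol_mulVec, Matrix.replicateRow_vecMul]
  simp only [Matrix.mul_assoc]

lemma trace_proj_zero_mul {n : ℕ} (M : Matrix (QIdx n) (QIdx n) ℂ) :
    (proj (zeroVec n) * M).trace = M (fun _ => 0) (fun _ => 0) := by
  classical
  have hz : zeroVec n = fun i => if i = (fun _ => (0 : Fin 2)) then (1:ℂ) else 0 := by
    funext i
    simp [zeroVec, funext_iff]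
  rw [Matrix.trace]
  simp [proj, Matrix.mul_apply, Matrix.vecMulVec, Matrix.diag, hz, apply_ite,
    ite_mul, Finset.sum_ite_eq', Finset.sum_ite_eq]

lemma sum_abs_pauli_zero {n : ℕ} :
    ∑ a : Fin n → Fin 4, ‖∏ k, pauliMat (a k) 0 0‖ = 2 ^ n := by
  classical
  have h : ∀ a : Fin n → Fin 4, ‖∏ k, pauliMat (a k) 0 0‖
      = ∏ k, ‖pauliMat (a k) 0 0‖ := fun a => norm_prod _ _
  simp_rw [h]
  rw [← Fintype.prod_sum (fun (_ : Fin n) (c : Fin 4) => ‖pauliMat c 0 0‖)]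
  have h4 : ∑ c : Fin 4, ‖pauliMat c 0 0‖ = 2 := by
    rw [Fin.sum_univ_four]
    simp [pauliMat, Matrix.one_apply]
    norm_num
  rw [Finset.prod_congr rfl fun k _ => h4, Finset.prod_const]
  simp

lemma sum_abs_trace_proj_stab {n : ℕ} {ψ : QIdx n → ℂ} (h : IsPureStab ψ) :
    ∑ a : Fin n → Fin 4, ‖(proj ψ * pauliString a).trace‖ = 2 ^ n := by
  classical
  obtain ⟨U, ⟨hUu, hC⟩, rfl⟩ := h
  choose b ε hsign hconj using hC
  have hUU : Uᴴ * U = 1 := by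
    have := hUu.1
    rwa [Matrix.star_eq_conjTranspose] at this
  have hsq : ∀ a, (ε a : ℂ) * (ε a : ℂ) = 1 := by
    intro a; rcases hsign a with h | h <;> simp [h]
  have hne : ∀ a, (ε a : ℂ) ≠ 0 := by
    intro a; rcases hsign a with h | h <;> simp [h]
  have hinv : ∀ a, Uᴴ * pauliString (b a) * U = (ε a : ℂ) • pauliString a := by
    intro a
    calc Uᴴ * pauliString (b a) * U
        = (ε a:ℂ) • ((ε a:ℂ) • (Uᴴ * pauliString (b a) * U)) := by
          rw [smul_smul, hsq, one_smul]
      _ = (ε a:ℂ) • (Uᴴ * ((ε a:ℂ) • pauliString (b a)) * U) := by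
          rw [Matrix.mul_smul, Matrix.smul_mul]
      _ = (ε a:ℂ) • (Uᴴ * (U * pauliString a * Uᴴ) * U) := by rw [hconj a]
      _ = (ε a:ℂ) • pauliString a := by
          congr 1
          calc Uᴴ * (U * pauliString a * Uᴴ) * U
              = (Uᴴ * U) * (pauliString a * (Uᴴ * U)) := by simp only [Matrix.mul_assoc]
            _ = pauliString a := by rw [hUU, Matrix.mul_one, Matrix.one_mul]
  have hinj : Function.Injective b := by
    intro a₁ a₂ hb
    have e1 : (ε a₂:ℂ) • pauliString a₂ = (ε a₁:ℂ) • pauliString a₁ := by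
      rw [← hinv a₂, ← hb, hinv a₁]
    have : pauliString a₁ = ((ε a₁:ℂ) * (ε a₂:ℂ)) • pauliString a₂ := by
      calc pauliString a₁ = (ε a₁:ℂ) • ((ε a₁:ℂ) • pauliString a₁) := by
            rw [smul_smul, hsq, one_smul]
        _ = (ε a₁:ℂ) • ((ε a₂:ℂ) • pauliString a₂) := by rw [e1]
        _ = ((ε a₁:ℂ) * (ε a₂:ℂ)) • pauliString a₂ := by rw [smul_smul]
    exact pauliString_eq_smul (mul_ne_zero (hne a₁) (hne a₂)) this
  have hbij : Function.Bijective b := Finite.injective_iff_bijective.mp hinj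
  have hpt : ∀ a, ‖(proj (U.mulVec (zeroVec n)) * pauliString (b a)).trace‖
      = ‖(proj (zeroVec n) * pauliString a).trace‖ := by
    intro a
    have hP : pauliString (b a) = (ε a : ℂ) • (U * pauliString a * Uᴴ) := by
      rw [hconj a, smul_smul, hsq a, one_smul]
    rw [proj_mulVec, hP]
    have hprod : U * proj (zeroVec n) * Uᴴ * ((ε a : ℂ) • (U * pauliString a * Uᴴ))
        = (ε a : ℂ) • (U * (proj (zeroVec n) * pauliString a) * Uᴴ) := by
      rw [Matrix.mul_smul]
      congr 1
      calc U * proj (zeroVec n) * Uᴴ * (U * pauliString a * Uᴴ)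
          = U * proj (zeroVec n) * (Uᴴ * U) * (pauliString a * Uᴴ) := by
            simp only [Matrix.mul_assoc]
        _ = U * (proj (zeroVec n) * pauliString a) * Uᴴ := by
            rw [hUU]; simp only [Matrix.mul_one, Matrix.mul_assoc]
    rw [hprod, Matrix.trace_smul, Matrix.trace_mul_cycle, ← Matrix.mul_assoc, hUU,
      Matrix.one_mul]
    rcases hsign a with h | h <;> simp [h]
  calc ∑ a : Fin n → Fin 4, ‖(proj (U.mulVec (zeroVec n)) * pauliString a).trace‖
      = ∑ a : Fin n → Fin 4,
          ‖(proj (U.mulVec (zeroVec n)) * pauliString (b a)).trace‖ := by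
        exact (Fintype.sum_bijective b hbij _ _ (fun a => rfl)).symm
    _ = ∑ a : Fin n → Fin 4, ‖(proj (zeroVec n) * pauliString a).trace‖ := by
        exact Finset.sum_congr rfl fun a _ => hpt a
    _ = 2 ^ n := by
        simp_rw [trace_proj_zero_mul]
        exact sum_abs_pauli_zero

end Aux

/-- every mixed stabilizer state has stabilizer norm at most one,
i.e. `D(ρ_C) ≤ 1` and `ln D(ρ_C) ≤ 0`. -/
theorem stabNorm_le_one_of_mixedStab {n : ℕ} (ρ : Matrix (QIdx n) (QIdx n) ℂ)
    (hρ : IsMixedStab ρ) :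
    Dnorm ρ ≤ 1 ∧ Real.log (Dnorm ρ) ≤ 0 := by
  classical
  obtain ⟨k, p, ψ, hp0, hp1, hstab, hrho⟩ := hρ
  have hexp : Dnorm ρ = ((2:ℝ)^n)⁻¹ * ∑ a : Fin n → Fin 4,
      ‖(ρ * pauliString a).trace‖ := by
    rw [Dnorm, Amom]
    norm_num
  have habs : ∀ a : Fin n → Fin 4, ‖(ρ * pauliString a).trace‖
      ≤ ∑ i, p i * ‖(proj (ψ i) * pauliString a).trace‖ := by
    intro a
    have : (ρ * pauliString a).trace
        = ∑ i, (p i : ℂ) * (proj (ψ i) * pauliString a).trace := by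
      rw [hrho, Finset.sum_mul]
      simp_rw [Matrix.smul_mul, Matrix.trace_sum, Matrix.trace_smul, smul_eq_mul]
    rw [this]
    refine le_trans (norm_sum_le _ _) (le_of_eq ?_)
    refine Finset.sum_congr rfl fun i _ => ?_
    rw [norm_mul, Complex.norm_of_nonneg (hp0 i)]
  have hsum : ∑ a : Fin n → Fin 4, ‖(ρ * pauliString a).trace‖ ≤ 2 ^ n := by
    calc ∑ a : Fin n → Fin 4, ‖(ρ * pauliString a).trace‖
        ≤ ∑ a : Fin n → Fin 4, ∑ i, p i * ‖(proj (ψ i) * pauliString a).trace‖ :=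
          Finset.sum_le_sum fun a _ => habs a
      _ = ∑ i, p i * ∑ a : Fin n → Fin 4, ‖(proj (ψ i) * pauliString a).trace‖ := by
          rw [Finset.sum_comm]
          simp [Finset.mul_sum]
      _ = ∑ i, p i * 2 ^ n := by
          refine Finset.sum_congr rfl fun i _ => ?_
          rw [sum_abs_trace_proj_stab (hstab i)]
      _ = 2 ^ n := by rw [← Finset.sum_mul, hp1, one_mul]
  have hD : Dnorm ρ ≤ 1 := by
    rw [hexp]
    calc ((2:ℝ)^n)⁻¹ * ∑ a : Fin n → Fin 4, ‖(ρ * pauliString a).trace‖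
        ≤ ((2:ℝ)^n)⁻¹ * 2 ^ n := by
          refine mul_le_mul_of_nonneg_left hsum (by positivity)
      _ = 1 := by
          rw [inv_mul_cancel₀]
          positivity
  have hD0 : 0 ≤ Dnorm ρ := by
    rw [hexp]
    have : 0 ≤ ∑ a : Fin n → Fin 4, ‖(ρ * pauliString a).trace‖ :=
      Finset.sum_nonneg fun a _ => norm_nonneg _
    positivity
  exact ⟨hD, Real.log_nonpos hD0 hD⟩

end
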